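/- Let G be a group and R, S subgroups of G × G each containing the diagonal. Then the relation RSR, relating a to d when ∃ b c, (a, b) ∈ R ∧ (b, c) ∈ S ∧ (c, d) ∈ R, is the smallest equivalence relation on G containing both the relation of R and the relation of S; equivalently, it equals the equivalence relation generated by the relation (a, d) ↦ ((a, d) ∈ R ∨ (a, d) ∈ S). -/
import Mathlib

section aux

variable {G : Type*} [Group G]

/-- A reflexive subgroup of `G × G` is symmetric as a relation. -/
lemma refl_subgroup_symm (R : Subgroup (G × G)) (hR : ∀ g : G, (g, g) ∈ R)
    {a b : G} (h : (a, b) ∈ R) : (b, a) ∈ R := by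
  have := mul_mem (mul_mem (hR b) (inv_mem h)) (hR a)
  simpa [Prod.mul_def] using this

/-- A reflexive subgroup of `G × G` is transitive as a relation. -/
lemma refl_subgroup_trans (R : Subgroup (G × G)) (hR : ∀ g : G, (g, g) ∈ R)
    {a b c : G} (h1 : (a, b) ∈ R) (h2 : (b, c) ∈ R) : (a, c) ∈ R := by
  have := mul_mem (mul_mem h1 (inv_mem (hR b))) h2
  simpa [Prod.mul_def] using this

/-- Reflexive subgroup relations permute (Mal'cev property). -/
lemma refl_subgroup_permute (R S : Subgroup (G × G)) (hR : ∀ g : G, (g, g) ∈ R)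
    (hS : ∀ g : G, (g, g) ∈ S) {a b c : G} (h1 : (a, b) ∈ R) (h2 : (b, c) ∈ S) :
    ∃ x, (a, x) ∈ S ∧ (x, c) ∈ R := by
  refine ⟨a * b⁻¹ * c, ?_, ?_⟩
  · have := mul_mem (mul_mem (hS a) (inv_mem (hS b))) h2
    simpa [Prod.mul_def, mul_assoc] using this
  · have := mul_mem (mul_mem h1 (inv_mem (hR b))) (hR c)
    simpa [Prod.mul_def, mul_assoc] using this

end aux

/-- For reflexive internal relations `R`, `S` on a group, `RSR` is the join `R ∨ S`:
it coincides with the equivalence relation generated by `R ∪ S`. -/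
theorem subgroup_relations_RSR_eq_join {G : Type*} [Group G]
    (R S : Subgroup (G × G)) (hR : ∀ g : G, (g, g) ∈ R) (hS : ∀ g : G, (g, g) ∈ S) :
    ∀ a d : G, (∃ b c, (a, b) ∈ R ∧ (b, c) ∈ S ∧ (c, d) ∈ R) ↔
      Relation.EqvGen (fun a d => (a, d) ∈ R ∨ (a, d) ∈ S) a d := by
  intro a d
  constructor
  · rintro ⟨b, c, hab, hbc, hcd⟩
    exact .trans _ _ _ (.rel _ _ (Or.inl hab))
      (.trans _ _ _ (.rel _ _ (Or.inr hbc)) (.rel _ _ (Or.inl hcd)))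
  · intro h
    induction h with
    | rel x y hxy =>
      rcases hxy with h | h
      · exact ⟨y, y, h, hS y, hR y⟩
      · exact ⟨x, y, hR x, h, hR y⟩
    | refl x => exact ⟨x, x, hR x, hS x, hR x⟩
    | symm x y _ ih =>
      obtain ⟨b, c, h1, h2, h3⟩ := ih
      exact ⟨c, b, refl_subgroup_symm R hR h3, refl_subgroup_symm S hS h2,
        refl_subgroup_symm R hR h1⟩
    | trans x y z _ _ ih1 ih2 =>
      obtain ⟨b, c, h1, h2, h3⟩ := ih1
      obtain ⟨e, f, h4, h5, h6⟩ := ih2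
      have hce : (c, e) ∈ R := refl_subgroup_trans R hR h3 h4
      obtain ⟨w, hbw, hwe⟩ := refl_subgroup_permute S R hS hR h2 hce
      exact ⟨w, f, refl_subgroup_trans R hR h1 hbw,
        refl_subgroup_trans S hS hwe h5, h6⟩
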